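/- Let X' be a smooth surface with χ(O_{X'}) = 1, let p: X → X' be the blow-up at a point with exceptional divisor E, and let A' = (A'₁,…,A'_n) be a toric system on X'. Then for each 1 ≤ m ≤ n+1, the augmented sequence augm_{p,m}(A') = (p*A'₁,…,p*A'_{m-2}, p*A'_{m-1} - E, E, p*A'_m - E, p*A'_{m+1},…, p*A'_n) (with the evident boundary conventions for m = 1 and m = n+1) is a toric system on X. -/

import Mathlib

private lemma periodic_zsmul' {M : Type*} (f : ℤ → M) (N : ℤ)
    (hf : ∀ i, f (i + N) = f i) : ∀ (k i : ℤ), f (i + k * N) = f i := by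
  intro k
  induction k using Int.induction_on with
  | zero => simp
  | succ k ih =>
      intro i
      have h : i + ((k : ℤ) + 1) * N = (i + N) + k * N := by ring
      rw [h, ih, hf]
  | pred k ih =>
      intro i
      have h : i + (-(k : ℤ) - 1) * N = (i - N) + (-(k:ℤ)) * N := by ring
      rw [h, ih]
      have := hf (i - N)
      rw [sub_add_cancel] at this
      rw [this]

private lemma window_sum' {M : Type*} [AddCommGroup M] (f : ℤ → M) (N : ℕ)
    (hf : ∀ i, f (i + (N:ℤ)) = f i) (t : ℤ) :
    ∑ i ∈ Finset.range N, f (t + (i:ℤ)) = ∑ i ∈ Finset.range N, f (i : ℤ) := by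
  have step : ∀ s : ℤ, ∑ i ∈ Finset.range N, f (s + 1 + (i:ℤ))
      = ∑ i ∈ Finset.range N, f (s + (i:ℤ)) := by
    intro s
    have h1 : ∑ i ∈ Finset.range (N+1), f (s + (i:ℤ))
        = ∑ i ∈ Finset.range N, f (s + (i:ℤ)) + f (s + (N:ℤ)) := by
      rw [Finset.sum_range_succ]
    have h2 : ∑ i ∈ Finset.range (N+1), f (s + (i:ℤ))
        = ∑ i ∈ Finset.range N, f (s + 1 + (i:ℤ)) + f (s + (0:ℤ)) := by
      rw [Finset.sum_range_succ']
      push_cast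
      simp only [show ∀ i:ℕ, s + ((i:ℤ)+1) = s + 1 + (i:ℤ) from fun i => by ring]
    rw [hf s] at h1
    rw [add_zero] at h2
    have := h1.symm.trans h2
    exact (add_right_cancel this).symm
  induction t using Int.induction_on with
  | zero => simp
  | succ k ih => rw [step k, ih]
  | pred k ih =>
      have := step (-(k:ℤ) - 1)
      rw [show -(k:ℤ) - 1 + 1 = -(k:ℤ) from by ring] at this
      exact this.symm.trans ih



/-- Let `p : X → X'` be the blow-up of a point on a surface
`X'` with `χ(O_{X'}) = 1`, with exceptional divisor `E`, so that
`p*D·p*D' = D·D'`, `p*D·E = 0`, `E² = -1` and `K_X = p*K_{X'} + E`.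
If `A' = (A'₁,…,A'_n)` is a toric system on `X'` (encoded as an
`n`-periodic sequence), then for each `1 ≤ m ≤ n + 1` the augmented
sequence `augm_{p,m}(A')` — the `(n+1)`-periodic sequence `B` with
`B_m = E`, `B_{m-1} = p*A'_{m-1} - E`, `B_{m+1} = p*A'_m - E` and
`B_{m+j} = p*A'_{m+j-1}` for `2 ≤ j ≤ n - 1` (this uniform cyclic
description incorporates the evident boundary conventions for `m = 1`
and `m = n + 1`) — is a toric system on `X`. -/
theorem augmentation_is_toric_system {Pic' Pic : Type*}
    [AddCommGroup Pic'] [AddCommGroup Pic]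
    (inter' : Pic' →ₗ[ℤ] Pic' →ₗ[ℤ] ℤ) (inter : Pic →ₗ[ℤ] Pic →ₗ[ℤ] ℤ)
    (hsymm' : ∀ a b : Pic', inter' a b = inter' b a)
    (hsymm : ∀ a b : Pic, inter a b = inter b a)
    (K' : Pic') (p : Pic' →+ Pic) (E : Pic)
    (hpull : ∀ D D' : Pic', inter (p D) (p D') = inter' D D')
    (hpE : ∀ D : Pic', inter (p D) E = 0)
    (hEE : inter E E = -1)
    (n : ℕ) (hn : 3 ≤ n)
    (A : ℤ → Pic')
    (hAper : ∀ i : ℤ, A (i + n) = A i)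
    (hAadj : ∀ i : ℤ, inter' (A i) (A (i + 1)) = 1)
    (hAorth : ∀ i j : ℤ, ¬((n : ℤ) ∣ j - i) → ¬((n : ℤ) ∣ j - i - 1) →
      ¬((n : ℤ) ∣ j - i + 1) → inter' (A i) (A j) = 0)
    (hAsum : ∑ i ∈ Finset.range n, A (i : ℤ) = -K')
    (m : ℤ) (hm1 : 1 ≤ m) (hm2 : m ≤ (n : ℤ) + 1)
    (B : ℤ → Pic)
    (hBper : ∀ i : ℤ, B (i + ((n : ℤ) + 1)) = B i)
    (hBm : B m = E)
    (hBprev : B (m - 1) = p (A (m - 1)) - E)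
    (hBnext : B (m + 1) = p (A m) - E)
    (hBrest : ∀ j : ℕ, 2 ≤ j → (j : ℤ) ≤ (n : ℤ) - 1 →
      B (m + (j : ℤ)) = p (A (m + (j : ℤ) - 1))) :
    (∀ i : ℤ, inter (B i) (B (i + 1)) = 1) ∧
    (∀ i j : ℤ, ¬(((n : ℤ) + 1) ∣ j - i) → ¬(((n : ℤ) + 1) ∣ j - i - 1) →
      ¬(((n : ℤ) + 1) ∣ j - i + 1) → inter (B i) (B j) = 0) ∧
    (∑ i ∈ Finset.range (n + 1), B (i : ℤ) = -(p K' + E)) := by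
  have hn3 : (3:ℤ) ≤ (n:ℤ) := by exact_mod_cast hn
  have hpos : (0:ℤ) < (n:ℤ) + 1 := by omega
  have hBperAll : ∀ (k i : ℤ), B (i + k * ((n:ℤ)+1)) = B i := periodic_zsmul' B _ hBper
  have hEp : ∀ D, inter E (p D) = 0 := fun D => by rw [hsymm]; exact hpE D
  have prod : ∀ (D D' : Pic') (a b : ℤ),
      inter (p D - a • E) (p D' - b • E) = inter' D D' - a * b := by
    intro D D' a b
    simp only [map_sub, map_smul, LinearMap.sub_apply, LinearMap.smul_apply, smul_eq_mul,
      hpull, hpE, hEE, hEp]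
    ring
  have hBn : B (m + (n:ℤ)) = p (A (m + (n:ℤ) - 1)) - E := by
    have hA : A (m + (n:ℤ) - 1) = A (m - 1) := by
      rw [show m + (n:ℤ) - 1 = (m - 1) + (n:ℤ) from by ring, hAper]
    rw [hA, show m + (n:ℤ) = (m - 1) + ((n:ℤ) + 1) from by ring, hBper, hBprev]
  have hBval : ∀ r : ℤ, 1 ≤ r → r ≤ (n:ℤ) →
      B (m + r) = p (A (m + r - 1)) - (if r = 1 ∨ r = (n:ℤ) then (1:ℤ) else 0) • E := by
    intro r h1 h2
    by_cases hr1 : r = 1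
    · subst hr1
      rw [if_pos (Or.inl rfl), one_smul, hBnext, add_sub_cancel_right]
    by_cases hrn : r = (n:ℤ)
    · subst hrn
      rw [if_pos (Or.inr rfl), one_smul, hBn]
    · rw [if_neg (by omega), zero_smul, sub_zero]
      obtain ⟨j, hj⟩ : ∃ j : ℕ, (j:ℤ) = r := ⟨r.toNat, by omega⟩
      rw [← hj]
      exact hBrest j (by omega) (by omega)
  -- adjacency on the fundamental window
  have adjKey : ∀ r : ℤ, 0 ≤ r → r ≤ (n:ℤ) → inter (B (m + r)) (B (m + r + 1)) = 1 := by
    intro r h0 hn'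
    by_cases hr0 : r = 0
    · subst hr0
      rw [add_zero, hBm, hBnext, map_sub, hEp, hEE]
      norm_num
    by_cases hrn : r = (n:ℤ)
    · subst hrn
      rw [show m + (n:ℤ) + 1 = m + ((n:ℤ) + 1) from by ring, hBper, hBm, hBn,
        map_sub, LinearMap.sub_apply, hpE, hEE]
      norm_num
    · rw [hBval r (by omega) (by omega), show m + r + 1 = m + (r + 1) from by ring,
        hBval (r+1) (by omega) (by omega), prod]
      have hA := hAadj (m + r - 1)
      rw [show m + r - 1 + 1 = m + (r + 1) - 1 from by ring] at hA
      rw [hA]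
      have hz : (if r = 1 ∨ r = (n:ℤ) then (1:ℤ) else 0)
          * (if r + 1 = 1 ∨ r + 1 = (n:ℤ) then (1:ℤ) else 0) = 0 := by
        split_ifs <;> omega
      rw [hz]; ring
  -- orthogonality on the fundamental window
  have orthKey : ∀ r s : ℤ, 0 ≤ r → s ≤ (n:ℤ) → 2 ≤ s - r → s - r ≤ (n:ℤ) - 1 →
      inter (B (m + r)) (B (m + s)) = 0 := by
    intro r s h0 hsn h2 hd
    by_cases hr0 : r = 0
    · subst hr0
      rw [add_zero, hBm, hBval s (by omega) (by omega), if_neg (by omega), zero_smul,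
        sub_zero, hEp]
    · rw [hBval r (by omega) (by omega), hBval s (by omega) (by omega), prod]
      by_cases hdn : s - r = (n:ℤ) - 1
      · have hr : r = 1 := by omega
        have hs : s = (n:ℤ) := by omega
        subst hr; subst hs
        have hA := hAadj (m + (n:ℤ) - 1)
        rw [show m + (n:ℤ) - 1 + 1 = m + (n:ℤ) from by ring, hAper m] at hA
        rw [show m + (1:ℤ) - 1 = m from by ring, hsymm', hA,
          if_pos (Or.inl rfl), if_pos (Or.inr rfl)]
        ring
      · have hnd : ∀ x : ℤ, 0 < x → x < (n:ℤ) → ¬ ((n:ℤ) ∣ x) := by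
          intro x hx1 hx2 h
          exact absurd (Int.le_of_dvd hx1 h) (by omega)
        have hA := hAorth (m + r - 1) (m + s - 1)
          (by rw [show m + s - 1 - (m + r - 1) = s - r from by ring]
              exact hnd _ (by omega) (by omega))
          (by rw [show m + s - 1 - (m + r - 1) - 1 = s - r - 1 from by ring]
              exact hnd _ (by omega) (by omega))
          (by rw [show m + s - 1 - (m + r - 1) + 1 = s - r + 1 from by ring]
              exact hnd _ (by omega) (by omega))
        rw [hA]
        have hz : (if r = 1 ∨ r = (n:ℤ) then (1:ℤ) else 0)
            * (if s = 1 ∨ s = (n:ℤ) then (1:ℤ) else 0) = 0 := by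
          split_ifs <;> omega
        rw [hz]; ring
  -- reduction of arbitrary indices to the window
  have hred : ∀ i : ℤ, ∃ r : ℤ, 0 ≤ r ∧ r ≤ (n:ℤ) ∧ (∀ t : ℤ, B (t + i) = B (t + (m + r)))
      ∧ (((n:ℤ)+1) ∣ (i - (m + r))) := by
    intro i
    refine ⟨(i - m) % ((n:ℤ)+1), Int.emod_nonneg _ (by omega), ?_, ?_, ?_⟩
    · have := Int.emod_lt_of_pos (i - m) hpos; omega
    · intro t
      have hkey := Int.emod_add_mul_ediv (i - m) ((n:ℤ)+1)
      have heq : t + i = (t + (m + (i - m) % ((n:ℤ)+1)))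
          + ((i - m) / ((n:ℤ)+1)) * ((n:ℤ)+1) := by
        have hc : ((n:ℤ)+1) * ((i - m) / ((n:ℤ)+1))
            = ((i - m) / ((n:ℤ)+1)) * ((n:ℤ)+1) := mul_comm _ _
        linarith
      rw [heq, hBperAll]
    · refine ⟨(i - m) / ((n:ℤ)+1), ?_⟩
      have hkey := Int.emod_add_mul_ediv (i - m) ((n:ℤ)+1)
      linarith
  refine ⟨?_, ?_, ?_⟩
  · -- adjacency
    intro i
    obtain ⟨r, h0, h1, hB, -⟩ := hred i
    have e0 := hB 0
    have e1 := hB 1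
    simp only [zero_add] at e0
    rw [show (1:ℤ) + i = i + 1 from by ring, show (1:ℤ) + (m + r) = m + r + 1 from by ring]
      at e1
    rw [e0, e1]
    exact adjKey r h0 h1
  · -- orthogonality
    intro i j hd0 hd1 hd2
    obtain ⟨r, hr0, hr1, hBi, hdi⟩ := hred i
    obtain ⟨s, hs0, hs1, hBj, hdj⟩ := hred j
    have e0 := hBi 0; have e1 := hBj 0
    simp only [zero_add] at e0 e1
    rw [e0, e1]
    -- N ∣ (j - i) - (s - r)
    have hcong : ((n:ℤ)+1) ∣ (j - i) - (s - r) := by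
      have := dvd_sub hdj hdi
      rwa [show (j - (m + s)) - (i - (m + r)) = (j - i) - (s - r) from by ring] at this
    have key : ∀ c : ℤ, ¬ ((n:ℤ)+1) ∣ (j - i + c) → ¬ ((n:ℤ)+1) ∣ (s - r + c) := by
      intro c hc h
      apply hc
      have := dvd_add hcong h
      rwa [show (j - i) - (s - r) + (s - r + c) = j - i + c from by ring] at this
    have k0 : ¬ ((n:ℤ)+1) ∣ (s - r) := by
      have := key 0 (by rwa [add_zero]); rwa [add_zero] at this
    have k1 : ¬ ((n:ℤ)+1) ∣ (s - r - 1) := by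
      have := key (-1) (by rw [show j - i + (-1) = j - i - 1 from by ring]; exact hd1)
      rwa [show s - r + (-1) = s - r - 1 from by ring] at this
    have k2 : ¬ ((n:ℤ)+1) ∣ (s - r + 1) := key 1 hd2
    have hne0 : s - r ≠ 0 := fun h => k0 (by rw [h]; exact dvd_zero _)
    have hne1 : s - r ≠ 1 := fun h => k1 (by rw [h]; simp)
    have hnen : s - r ≠ -(n:ℤ) := fun h => k1 ⟨-1, by rw [h]; ring⟩
    have hnem1 : s - r ≠ -1 := fun h => k2 (by rw [h]; simp)
    have hnen' : s - r ≠ (n:ℤ) := fun h => k2 ⟨1, by rw [h]; ring⟩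
    by_cases hgt : 0 < s - r
    · exact orthKey r s hr0 hs1 (by omega) (by omega)
    · rw [hsymm]
      exact orthKey s r hs0 hr1 (by omega) (by omega)
  · -- the sum
    have hBper1 : ∀ i : ℤ, B (i + ((n+1 : ℕ) : ℤ)) = B i := by
      intro i; push_cast; exact hBper i
    have h1 : ∑ i ∈ Finset.range (n+1), B (i:ℤ)
        = ∑ i ∈ Finset.range (n+1), B (m + (i:ℤ)) := (window_sum' B (n+1) hBper1 m).symm
    rw [h1, Finset.sum_range_succ']
    simp only [Nat.cast_zero, add_zero, Nat.cast_add, Nat.cast_one, hBm]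
    have h2 : ∀ i ∈ Finset.range n, B (m + ((i:ℤ) + 1))
        = p (A (m + (i:ℤ))) - (if (i:ℤ) + 1 = 1 ∨ (i:ℤ) + 1 = (n:ℤ) then (1:ℤ) else 0) • E := by
      intro i hi
      have hi' : (i:ℤ) < n := by exact_mod_cast Finset.mem_range.mp hi
      have := hBval ((i:ℤ) + 1) (by omega) (by omega)
      rwa [show m + ((i:ℤ) + 1) - 1 = m + (i:ℤ) from by ring] at this
    rw [Finset.sum_congr rfl h2, Finset.sum_sub_distrib, ← Finset.sum_smul]
    have h3 : ∑ i ∈ Finset.range n, (if (i:ℤ) + 1 = 1 ∨ (i:ℤ) + 1 = (n:ℤ) then (1:ℤ) else 0)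
        = 2 := by
      have h4 : ∀ i ∈ Finset.range n, (if (i:ℤ) + 1 = 1 ∨ (i:ℤ) + 1 = (n:ℤ) then (1:ℤ) else 0)
          = (if i = 0 then (1:ℤ) else 0) + (if i = n - 1 then (1:ℤ) else 0) := by
        intro i hi
        have hi' : i < n := Finset.mem_range.mp hi
        have c1 : ((i:ℤ) + 1 = 1 ∨ (i:ℤ) + 1 = (n:ℤ)) ↔ (i = 0 ∨ i = n - 1) := by
          constructor <;> intro h <;> omega
        by_cases h : (i:ℤ) + 1 = 1 ∨ (i:ℤ) + 1 = (n:ℤ)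
        · rw [if_pos h]
          rcases c1.mp h with h' | h'
          · rw [if_pos h', if_neg (by omega)]; ring
          · rw [if_pos h', if_neg (by omega)]; ring
        · rw [if_neg h]
          have := c1.not.mp h
          rw [if_neg (by omega), if_neg (by omega)]; ring
      rw [Finset.sum_congr rfl h4, Finset.sum_add_distrib, Finset.sum_ite_eq',
        Finset.sum_ite_eq', if_pos (Finset.mem_range.mpr (by omega)),
        if_pos (Finset.mem_range.mpr (by omega))]
      norm_num
    rw [h3]
    have h5 : ∑ i ∈ Finset.range n, p (A (m + (i:ℤ))) = p (-K') := by
      rw [← map_sum, window_sum' A n hAper m, hAsum]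
    rw [h5, map_neg]
    have : (2:ℤ) • E = E + E := two_smul ℤ E
    rw [this]
    abel
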